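/- Assume framework FR. There is a closed linear subspace X of JL(𝓑) such that JL(𝓑) is the internal direct sum of JL(𝓐) and X, and both JL(𝓐) and X are 1-complemented in JL(𝓑). Specifically, the map P defined for g ∈ JL(𝓑) by (Pg)(n,0) = (Pg)(n,1) = ½(g(n,0)+g(n,1)) is a bounded linear projection of norm 1 from JL(𝓑) onto JL(𝓐), and Q = I − P is a bounded linear projection of norm 1 from JL(𝓑) onto X = ker P. -/

import Mathlib

open scoped ENNReal Classical

/-- The underlying countable set `ω × 2`. -/
abbrev S2 : Type := ℕ × Fin 2

/-- The cylinder `C₀ × 2 ⊆ ω × 2`. -/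
def cyl (C₀ : Set ℕ) : Set S2 := {s : S2 | s.1 ∈ C₀}

/-- The cylinder `c_n = {(n,0), (n,1)}`. -/
def cylAt (n : ℕ) : Set S2 := {s : S2 | s.1 = n}

/-- `B` splits the cylinder `C`: `B ⊆ C` and `B ∩ c_n` has exactly one element
whenever `c_n ⊆ C`. -/
def SplitsCyl (C B : Set S2) : Prop :=
  B ⊆ C ∧ ∀ n : ℕ, cylAt n ⊆ C → ∃! s : S2, s ∈ B ∩ cylAt n

/-- The pair `(B₀, B₁)` is a splitting of the cylinder `C`. -/
def IsSplittingOf (C B0 B1 : Set S2) : Prop := SplitsCyl C B0 ∧ B1 = C \ B0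

/-- The family `𝓑 = {B_A^i : A ∈ 𝓐, i ∈ {0,1}}`. -/
def famB (𝓐 : Set (Set S2)) (B0 B1 : Set S2 → Set S2) : Set (Set S2) :=
  {B : Set S2 | ∃ A ∈ 𝓐, B = B0 A ∨ B = B1 A}

/-- Framework FR(1)–FR(3): `𝓐` is an almost disjoint family of infinite cylinders in
`ω × 2`; for every `A ∈ 𝓐` the pair `B0 A, B1 A` is a splitting of `A`; and the family
`𝓑 = {B_A^i}` is almost disjoint. -/
def FRhyp (𝓐 : Set (Set S2)) (B0 B1 : Set S2 → Set S2) : Prop :=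
  (∀ A ∈ 𝓐, ∃ C₀ : Set ℕ, A = cyl C₀) ∧ (∀ A ∈ 𝓐, A.Infinite) ∧
    (∀ A ∈ 𝓐, ∀ A' ∈ 𝓐, A ≠ A' → (A ∩ A').Finite) ∧
    (∀ A ∈ 𝓐, IsSplittingOf A (B0 A) (B1 A)) ∧
    (∀ B ∈ famB 𝓐 B0 B1, ∀ B' ∈ famB 𝓐 B0 B1, B ≠ B' → (B ∩ B').Finite)

/-- Membership in the algebra of sets generated by a family `G` of subsets of `S`. -/
inductive genAlgMem {S : Type*} (G : Set (Set S)) : Set S → Prop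
  | base {A : Set S} : A ∈ G → genAlgMem G A
  | empty : genAlgMem G ∅
  | compl {A : Set S} : genAlgMem G A → genAlgMem G Aᶜ
  | union {A B : Set S} : genAlgMem G A → genAlgMem G B → genAlgMem G (A ∪ B)

/-- The algebra of subsets of `S` generated by a family `G`. -/
def genAlg {S : Type*} (G : Set (Set S)) : Set (Set S) := {A | genAlgMem G A}

/-- FR(4): the algebra `𝔄` generated by `𝓐 ∪ {c_n : n ∈ ω}`. -/
def algA (𝓐 : Set (Set S2)) : Set (Set S2) := genAlg (𝓐 ∪ {C : Set S2 | ∃ n : ℕ, C = cylAt n})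

/-- FR(5): the algebra `𝔅` generated by `𝓑 ∪ fin(ω × 2)`. -/
def algB (𝓐 : Set (Set S2)) (B0 B1 : Set S2 → Set S2) : Set (Set S2) :=
  genAlg (famB 𝓐 B0 B1 ∪ {F : Set S2 | F.Finite})

/-- The characteristic function of a set `B`, as an element of `ℓ∞`. -/
noncomputable def ind {S : Type*} (B : Set S) : lp (fun _ : S => ℝ) ∞ :=
  ⟨B.indicator (fun _ => (1 : ℝ)), by
    apply memℓp_infty
    refine ⟨1, ?_⟩
    rintro x ⟨s, rfl⟩
    by_cases h : s ∈ B <;> simp [h]⟩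

/-- The Johnson–Lindenstrauss space `JL(𝓐)` of the family of cylinders `𝓐`: the closed
linear span in `ℓ∞(ω × 2)` of the characteristic functions of members of `𝓐`, of finite
cylinders, and of the constant function `1`. -/
noncomputable def JLA (𝓐 : Set (Set S2)) : Submodule ℝ (lp (fun _ : S2 => ℝ) ∞) :=
  (Submodule.span ℝ (ind ''
      (𝓐 ∪ {C : Set S2 | ∃ F : Set ℕ, F.Finite ∧ C = cyl F} ∪ {Set.univ}))).topologicalClosure

/-- The Johnson–Lindenstrauss space `JL(𝓑)`: the closed linear span in `ℓ∞(ω × 2)` of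
the characteristic functions of members of `𝓑`, of finite sets, and of the constant
function `1`. -/
noncomputable def JLB (𝓐 : Set (Set S2)) (B0 B1 : Set S2 → Set S2) :
    Submodule ℝ (lp (fun _ : S2 => ℝ) ∞) :=
  (Submodule.span ℝ (ind ''
      (famB 𝓐 B0 B1 ∪ {F : Set S2 | F.Finite} ∪ {Set.univ}))).topologicalClosure


namespace St8

noncomputable abbrev L := lp (fun _ : S2 => ℝ) ∞

lemma ind_apply {S : Type*} (B : Set S) (s : S) :
    (ind B : (_ : S) → ℝ) s = B.indicator (fun _ => (1 : ℝ)) s := rfl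

/-- averaging as a bare function -/
noncomputable def Tfun (f : L) : S2 → ℝ := fun s => ((f : S2 → ℝ) (s.1, 0) + (f : S2 → ℝ) (s.1, 1)) / 2

lemma Tfun_bound (f : L) (s : S2) : ‖Tfun f s‖ ≤ ‖f‖ := by
  have h0 := lp.norm_apply_le_norm (E := fun _ : S2 => ℝ) ENNReal.top_ne_zero f (s.1, 0)
  have h1 := lp.norm_apply_le_norm (E := fun _ : S2 => ℝ) ENNReal.top_ne_zero f (s.1, 1)
  simp only [Real.norm_eq_abs] at *
  rw [Tfun, abs_div]
  rw [div_le_iff₀ (by norm_num)]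
  calc |(f : S2 → ℝ) (s.1,0) + (f : S2 → ℝ) (s.1,1)| ≤ |(f : S2 → ℝ) (s.1,0)| + |(f : S2 → ℝ) (s.1,1)| := abs_add_le _ _
    _ ≤ ‖f‖ + ‖f‖ := by simp only [abs_two]; exact add_le_add h0 h1
    _ = ‖f‖ * |2| := by rw [abs_two]; ring

lemma Tfun_mem (f : L) : Memℓp (Tfun f) ∞ := by
  apply memℓp_infty
  refine ⟨‖f‖, ?_⟩
  rintro x ⟨s, rfl⟩
  exact Tfun_bound f s

noncomputable def Tlin : L →ₗ[ℝ] L where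
  toFun f := ⟨Tfun f, Tfun_mem f⟩
  map_add' f g := by
    apply lp.ext
    funext s
    simp only [lp.coeFn_add, Pi.add_apply]
    show Tfun (f + g) s = Tfun f s + Tfun g s
    simp only [Tfun, lp.coeFn_add, Pi.add_apply]
    ring
  map_smul' c f := by
    apply lp.ext
    funext s
    simp only [lp.coeFn_smul, Pi.smul_apply, RingHom.id_apply]
    show Tfun (c • f) s = c • Tfun f s
    simp only [Tfun, lp.coeFn_smul, Pi.smul_apply, smul_eq_mul]
    ring

noncomputable def T : L →L[ℝ] L :=
  Tlin.mkContinuous 1 (by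
    intro f
    rw [one_mul]
    exact lp.norm_le_of_forall_le (norm_nonneg f) fun s => Tfun_bound f s)

lemma T_apply (f : L) (s : S2) : ((T f : L) : S2 → ℝ) s =
    ((f : S2 → ℝ) (s.1, 0) + (f : S2 → ℝ) (s.1, 1)) / 2 := rfl

lemma T_norm_le (f : L) : ‖T f‖ ≤ ‖f‖ :=
  lp.norm_le_of_forall_le (norm_nonneg f) fun s => Tfun_bound f s

/-- fiber-constant functions -/
noncomputable def FC : Submodule ℝ L where
  carrier := {f : L | ∀ n : ℕ, (f : S2 → ℝ) (n, 0) = (f : S2 → ℝ) (n, 1)}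
  add_mem' {f g} hf hg n := by simp only [lp.coeFn_add, Pi.add_apply, hf n, hg n]
  zero_mem' n := by simp [lp.coeFn_zero]
  smul_mem' c f hf := by intro n; simp only [lp.coeFn_smul, Pi.smul_apply, hf n]

noncomputable def evalCLM (s : S2) : L →L[ℝ] ℝ :=
  LinearMap.mkContinuous
    { toFun := fun f => (f : S2 → ℝ) s
      map_add' := fun f g => by simp [lp.coeFn_add]
      map_smul' := fun c f => by simp [lp.coeFn_smul] } 1
    (fun f => by
      rw [one_mul]
      exact lp.norm_apply_le_norm ENNReal.top_ne_zero f s)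

lemma FC_isClosed : IsClosed (FC : Set L) := by
  have : (FC : Set L) = ⋂ n : ℕ, {f : L | evalCLM (n, 0) f = evalCLM (n, 1) f} := by
    ext f
    simp [FC, evalCLM, Set.mem_iInter]
    exact Iff.rfl
  rw [this]
  exact isClosed_iInter fun n =>
    isClosed_eq (evalCLM (n, 0)).continuous (evalCLM (n, 1)).continuous

lemma T_mem_FC (f : L) : T f ∈ FC := fun _ => rfl

lemma T_of_FC {f : L} (hf : f ∈ FC) : T f = f := by
  apply lp.ext
  funext s
  obtain ⟨n, i⟩ := s
  rw [T_apply]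
  fin_cases i
  · show ((f : S2 → ℝ) (n, 0) + (f : S2 → ℝ) (n, 1)) / 2 = (f : S2 → ℝ) (n, 0)
    rw [← hf n]; ring
  · show ((f : S2 → ℝ) (n, 0) + (f : S2 → ℝ) (n, 1)) / 2 = (f : S2 → ℝ) (n, 1)
    rw [hf n]; ring

end St8

namespace St8

lemma mem_cyl_iff {C₀ : Set ℕ} {s : S2} : s ∈ cyl C₀ ↔ s.1 ∈ C₀ := Iff.rfl

lemma ind_cyl_mem_FC (C₀ : Set ℕ) : ind (cyl C₀) ∈ FC := by
  intro n
  by_cases h : n ∈ C₀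
  · rw [ind_apply, ind_apply,
      Set.indicator_of_mem (show ((n, (0 : Fin 2)) : S2) ∈ cyl C₀ from h),
      Set.indicator_of_mem (show ((n, (1 : Fin 2)) : S2) ∈ cyl C₀ from h)]
  · rw [ind_apply, ind_apply,
      Set.indicator_of_notMem (show ((n, (0 : Fin 2)) : S2) ∉ cyl C₀ from h),
      Set.indicator_of_notMem (show ((n, (1 : Fin 2)) : S2) ∉ cyl C₀ from h)]

lemma ind_univ_mem_FC : ind (Set.univ : Set S2) ∈ FC := by
  have : (Set.univ : Set S2) = cyl Set.univ := by ext s; simp [cyl]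
  rw [this]; exact ind_cyl_mem_FC _

/-- exactly one of `(n,0)`, `(n,1)` belongs to a set splitting a cylinder containing `c_n` -/
lemma split_pair {A b0 : Set S2} {C₀ : Set ℕ} (hA : A = cyl C₀) (hs : SplitsCyl A b0)
    {n : ℕ} (hn : n ∈ C₀) :
    (((n, 0) : S2) ∈ b0 ∧ ((n, 1) : S2) ∉ b0) ∨ (((n, 0) : S2) ∉ b0 ∧ ((n, 1) : S2) ∈ b0) := by
  have hsub : cylAt n ⊆ A := by
    intro s hs'
    rw [hA]
    exact show s.1 ∈ C₀ from hs' ▸ hn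
  obtain ⟨s0, ⟨hB, hcy⟩, hu⟩ := hs.2 n hsub
  obtain ⟨m, j⟩ := s0
  have hm : m = n := hcy
  subst hm
  fin_cases j
  · left
    refine ⟨hB, fun h1 => ?_⟩
    have := hu (m, 1) ⟨h1, rfl⟩
    simp at this
  · right
    refine ⟨fun h0 => ?_, hB⟩
    have := hu (m, 0) ⟨h0, rfl⟩
    simp at this

lemma T_ind_split {A b0 b1 B : Set S2} {C₀ : Set ℕ} (hA : A = cyl C₀)
    (hsp : IsSplittingOf A b0 b1) (hB : B = b0 ∨ B = b1) :
    T (ind B) = (2 : ℝ)⁻¹ • ind A := by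
  obtain ⟨hs, hb1⟩ := hsp
  apply lp.ext
  funext s
  obtain ⟨n, i⟩ := s
  rw [T_apply, lp.coeFn_smul, Pi.smul_apply, smul_eq_mul]
  simp only [ind_apply]
  by_cases hn : n ∈ C₀
  · have hA0 : ((n, 0) : S2) ∈ A := by rw [hA]; exact hn
    have hA1 : ((n, 1) : S2) ∈ A := by rw [hA]; exact hn
    have hAi : ((n, i) : S2) ∈ A := by rw [hA]; exact hn
    have hpair := split_pair hA hs hn
    have hkey : (((n, 0) : S2) ∈ B ∧ ((n, 1) : S2) ∉ B) ∨
        (((n, 0) : S2) ∉ B ∧ ((n, 1) : S2) ∈ B) := by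
      rcases hB with rfl | rfl
      · exact hpair
      · subst hb1
        rcases hpair with ⟨h0, h1⟩ | ⟨h0, h1⟩
        · exact Or.inr ⟨fun h => h.2 h0, ⟨hA1, h1⟩⟩
        · exact Or.inl ⟨⟨hA0, h0⟩, fun h => h.2 h1⟩
    rw [Set.indicator_of_mem hAi]
    rcases hkey with ⟨h0, h1⟩ | ⟨h0, h1⟩
    · rw [Set.indicator_of_mem h0, Set.indicator_of_notMem h1]; norm_num
    · rw [Set.indicator_of_notMem h0, Set.indicator_of_mem h1]; norm_num
  · have hBsub : B ⊆ A := by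
      rcases hB with rfl | rfl
      · exact hs.1
      · rw [hb1]; exact Set.diff_subset
    have hA0 : ((n, 0) : S2) ∉ A := by rw [hA]; exact hn
    have hA1 : ((n, 1) : S2) ∉ A := by rw [hA]; exact hn
    have hAi : ((n, i) : S2) ∉ A := by rw [hA]; exact hn
    rw [Set.indicator_of_notMem hAi, Set.indicator_of_notMem (fun h => hA0 (hBsub h)),
      Set.indicator_of_notMem (fun h => hA1 (hBsub h))]
    norm_num

lemma T_ind_finite {F : Set S2} :
    T (ind F) = (2 : ℝ)⁻¹ • ind (cyl ((fun n => ((n, 0) : S2)) ⁻¹' F)) +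
      (2 : ℝ)⁻¹ • ind (cyl ((fun n => ((n, 1) : S2)) ⁻¹' F)) := by
  apply lp.ext
  funext s
  obtain ⟨n, i⟩ := s
  rw [T_apply, lp.coeFn_add, Pi.add_apply, lp.coeFn_smul, lp.coeFn_smul,
    Pi.smul_apply, Pi.smul_apply, smul_eq_mul, smul_eq_mul]
  simp only [ind_apply]
  have h0 : (((n, i) : S2) ∈ cyl ((fun n => ((n, 0) : S2)) ⁻¹' F)) ↔ ((n, 0) : S2) ∈ F := Iff.rfl
  have h1 : (((n, i) : S2) ∈ cyl ((fun n => ((n, 1) : S2)) ⁻¹' F)) ↔ ((n, 1) : S2) ∈ F := Iff.rfl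
  by_cases hF0 : ((n, 0) : S2) ∈ F <;> by_cases hF1 : ((n, 1) : S2) ∈ F
  · rw [Set.indicator_of_mem hF0, Set.indicator_of_mem hF1,
      Set.indicator_of_mem (h0.mpr hF0), Set.indicator_of_mem (h1.mpr hF1)]; norm_num
  · rw [Set.indicator_of_mem hF0, Set.indicator_of_notMem hF1,
      Set.indicator_of_mem (h0.mpr hF0), Set.indicator_of_notMem (fun h => hF1 (h1.mp h))]
    norm_num
  · rw [Set.indicator_of_notMem hF0, Set.indicator_of_mem hF1,
      Set.indicator_of_notMem (fun h => hF0 (h0.mp h)), Set.indicator_of_mem (h1.mpr hF1)]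
    norm_num
  · rw [Set.indicator_of_notMem hF0, Set.indicator_of_notMem hF1,
      Set.indicator_of_notMem (fun h => hF0 (h0.mp h)),
      Set.indicator_of_notMem (fun h => hF1 (h1.mp h))]
    norm_num

lemma ind_split_add {A b0 b1 : Set S2} (hsp : IsSplittingOf A b0 b1) :
    ind A = ind b0 + ind b1 := by
  obtain ⟨hs, hb1⟩ := hsp
  subst hb1
  apply lp.ext
  funext s
  rw [lp.coeFn_add, Pi.add_apply]
  simp only [ind_apply]
  by_cases hb : s ∈ b0
  · rw [Set.indicator_of_mem (hs.1 hb), Set.indicator_of_mem hb,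
      Set.indicator_of_notMem (fun h => h.2 hb)]
    norm_num
  · by_cases hA : s ∈ A
    · rw [Set.indicator_of_mem hA, Set.indicator_of_notMem hb,
        Set.indicator_of_mem (show s ∈ A \ b0 from ⟨hA, hb⟩)]
      norm_num
    · rw [Set.indicator_of_notMem hA, Set.indicator_of_notMem hb,
        Set.indicator_of_notMem (fun h => hA h.1)]
      norm_num

end St8


namespace St8

lemma ind_mem_JLA_of_A {𝓐 : Set (Set S2)} {A : Set S2} (hA : A ∈ 𝓐) : ind A ∈ JLA 𝓐 :=
  Submodule.le_topologicalClosure _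
    (Submodule.subset_span ⟨A, Or.inl (Or.inl hA), rfl⟩)

lemma ind_mem_JLA_of_fincyl {𝓐 : Set (Set S2)} {F : Set ℕ} (hF : F.Finite) :
    ind (cyl F) ∈ JLA 𝓐 :=
  Submodule.le_topologicalClosure _
    (Submodule.subset_span ⟨cyl F, Or.inl (Or.inr ⟨F, hF, rfl⟩), rfl⟩)

lemma ind_mem_JLA_univ {𝓐 : Set (Set S2)} : ind (Set.univ : Set S2) ∈ JLA 𝓐 :=
  Submodule.le_topologicalClosure _
    (Submodule.subset_span ⟨Set.univ, Or.inr rfl, rfl⟩)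

lemma ind_mem_JLB_of_B {𝓐 : Set (Set S2)} {B0 B1 : Set S2 → Set S2} {B : Set S2}
    (hB : B ∈ famB 𝓐 B0 B1) : ind B ∈ JLB 𝓐 B0 B1 :=
  Submodule.le_topologicalClosure _
    (Submodule.subset_span ⟨B, Or.inl (Or.inl hB), rfl⟩)

lemma ind_mem_JLB_of_finite {𝓐 : Set (Set S2)} {B0 B1 : Set S2 → Set S2} {F : Set S2}
    (hF : F.Finite) : ind F ∈ JLB 𝓐 B0 B1 :=
  Submodule.le_topologicalClosure _
    (Submodule.subset_span ⟨F, Or.inl (Or.inr hF), rfl⟩)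

lemma ind_mem_JLB_univ {𝓐 : Set (Set S2)} {B0 B1 : Set S2 → Set S2} :
    ind (Set.univ : Set S2) ∈ JLB 𝓐 B0 B1 :=
  Submodule.le_topologicalClosure _
    (Submodule.subset_span ⟨Set.univ, Or.inr rfl, rfl⟩)

lemma preimage_fin {F : Set S2} (hF : F.Finite) (j : Fin 2) :
    ((fun n => ((n, j) : S2)) ⁻¹' F).Finite := by
  apply Set.Finite.preimage _ hF
  intro a _ b _ h
  exact congrArg Prod.fst h

lemma JLA_le_JLB (𝓐 : Set (Set S2)) (B0 B1 : Set S2 → Set S2) (hFR : FRhyp 𝓐 B0 B1) :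
    JLA 𝓐 ≤ JLB 𝓐 B0 B1 := by
  apply Submodule.topologicalClosure_minimal
  · rw [Submodule.span_le]
    rintro x ⟨C, hC, rfl⟩
    rcases hC with (hC | ⟨F, hF, rfl⟩) | hC
    · have hsp := hFR.2.2.2.1 C hC
      rw [SetLike.mem_coe, ind_split_add hsp]
      exact Submodule.add_mem _
        (ind_mem_JLB_of_B ⟨C, hC, Or.inl rfl⟩)
        (ind_mem_JLB_of_B ⟨C, hC, Or.inr rfl⟩)
    · refine ind_mem_JLB_of_finite ?_
      apply Set.Finite.subset (Set.Finite.prod hF (Set.finite_univ (α := Fin 2)))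
      intro s hs
      exact ⟨hs, Set.mem_univ _⟩
    · rw [Set.mem_singleton_iff] at hC
      subst hC
      exact ind_mem_JLB_univ
  · exact Submodule.isClosed_topologicalClosure _

lemma JLA_le_FC (𝓐 : Set (Set S2)) (h1 : ∀ A ∈ 𝓐, ∃ C₀ : Set ℕ, A = cyl C₀) :
    JLA 𝓐 ≤ FC := by
  apply Submodule.topologicalClosure_minimal
  · rw [Submodule.span_le]
    rintro x ⟨C, hC, rfl⟩
    rcases hC with (hC | ⟨F, _, rfl⟩) | hC
    · obtain ⟨C₀, rfl⟩ := h1 C hC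
      exact ind_cyl_mem_FC C₀
    · exact ind_cyl_mem_FC F
    · rw [Set.mem_singleton_iff] at hC
      subst hC
      exact ind_univ_mem_FC
  · exact FC_isClosed

lemma T_maps_JLB_to_JLA (𝓐 : Set (Set S2)) (B0 B1 : Set S2 → Set S2)
    (hFR : FRhyp 𝓐 B0 B1) : ∀ f, f ∈ JLB 𝓐 B0 B1 → T f ∈ JLA 𝓐 := by
  have hC : IsClosed ((Submodule.comap (T : L →ₗ[ℝ] L) (JLA 𝓐) : Submodule ℝ L) : Set L) := by
    have : ((Submodule.comap (T : L →ₗ[ℝ] L) (JLA 𝓐) : Submodule ℝ L) : Set L) =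
        T ⁻¹' (JLA 𝓐 : Set L) := rfl
    rw [this]
    exact (Submodule.isClosed_topologicalClosure _).preimage T.continuous
  have hle : JLB 𝓐 B0 B1 ≤ Submodule.comap (T : L →ₗ[ℝ] L) (JLA 𝓐) := by
    refine Submodule.topologicalClosure_minimal _ ?_ hC
    rw [Submodule.span_le]
    rintro x ⟨C, hC', rfl⟩
    rcases hC' with (⟨A, hA, hBi⟩ | hFin) | hC'
    · obtain ⟨C₀, hAC⟩ := hFR.1 A hA
      have hsp := hFR.2.2.2.1 A hA
      have : T (ind C) = (2 : ℝ)⁻¹ • ind A := T_ind_split hAC hsp hBi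
      simp only [SetLike.mem_coe, Submodule.mem_comap, ContinuousLinearMap.coe_coe, this]
      exact Submodule.smul_mem _ _ (ind_mem_JLA_of_A hA)
    · simp only [SetLike.mem_coe, Submodule.mem_comap, ContinuousLinearMap.coe_coe,
        T_ind_finite (F := C)]
      exact Submodule.add_mem _
        (Submodule.smul_mem _ _ (ind_mem_JLA_of_fincyl (preimage_fin hFin 0)))
        (Submodule.smul_mem _ _ (ind_mem_JLA_of_fincyl (preimage_fin hFin 1)))
    · rw [Set.mem_singleton_iff] at hC'
      subst hC'
      simp only [SetLike.mem_coe, Submodule.mem_comap, ContinuousLinearMap.coe_coe,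
        T_of_FC ind_univ_mem_FC]
      exact ind_mem_JLA_univ
  exact fun f hf => hle hf

end St8


namespace St8

lemma norm_ind_univ : ‖ind (Set.univ : Set S2)‖ = 1 := by
  apply le_antisymm
  · apply lp.norm_le_of_forall_le zero_le_one
    intro s
    rw [ind_apply, Set.indicator_of_mem (Set.mem_univ s)]
    simp
  · have := lp.norm_apply_le_norm (E := fun _ : S2 => ℝ) ENNReal.top_ne_zero
      (ind (Set.univ : Set S2)) ((0 : ℕ), (0 : Fin 2))
    rw [ind_apply, Set.indicator_of_mem (Set.mem_univ _), norm_one] at this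
    exact this

noncomputable def g1 : L :=
  ind {((0 : ℕ), (0 : Fin 2))} - ind {((0 : ℕ), (1 : Fin 2))}

lemma g1_mem (𝓐 : Set (Set S2)) (B0 B1 : Set S2 → Set S2) : g1 ∈ JLB 𝓐 B0 B1 :=
  Submodule.sub_mem _ (ind_mem_JLB_of_finite (Set.finite_singleton _))
    (ind_mem_JLB_of_finite (Set.finite_singleton _))

lemma g1_apply (s : S2) : (g1 : S2 → ℝ) s =
    (if s = ((0 : ℕ), (0 : Fin 2)) then (1 : ℝ) else 0) -
      (if s = ((0 : ℕ), (1 : Fin 2)) then (1 : ℝ) else 0) := by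
  rw [g1, lp.coeFn_sub, Pi.sub_apply, ind_apply, ind_apply]
  congr 1 <;>
  · rw [Set.indicator]
    simp [Set.mem_singleton_iff]

lemma T_g1 : T g1 = 0 := by
  apply lp.ext
  funext s
  obtain ⟨n, i⟩ := s
  rw [T_apply, lp.coeFn_zero, Pi.zero_apply, g1_apply, g1_apply]
  by_cases hn : n = 0
  · subst hn
    norm_num [Prod.ext_iff]
  · simp [Prod.ext_iff, hn]

lemma norm_g1 : ‖g1‖ = 1 := by
  apply le_antisymm
  · apply lp.norm_le_of_forall_le zero_le_one
    intro s
    rw [g1_apply]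
    by_cases h0 : s = ((0 : ℕ), (0 : Fin 2))
    · subst h0
      rw [if_pos rfl, if_neg (by decide)]
      norm_num
    · by_cases h1 : s = ((0 : ℕ), (1 : Fin 2))
      · subst h1
        rw [if_neg (by decide), if_pos rfl]
        norm_num
      · rw [if_neg h0, if_neg h1]
        norm_num
  · have := lp.norm_apply_le_norm (E := fun _ : S2 => ℝ) ENNReal.top_ne_zero g1
      ((0 : ℕ), (0 : Fin 2))
    rw [g1_apply] at this
    have hne : ((0 : ℕ), (0 : Fin 2)) ≠ ((0 : ℕ), (1 : Fin 2)) := by decide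
    rw [if_pos rfl, if_neg hne, sub_zero, norm_one] at this
    exact this

lemma sub_T_bound (f : L) (s : S2) : ‖(f : S2 → ℝ) s - Tfun f s‖ ≤ ‖f‖ := by
  obtain ⟨n, i⟩ := s
  have h0 := lp.norm_apply_le_norm (E := fun _ : S2 => ℝ) ENNReal.top_ne_zero f (n, 0)
  have h1 := lp.norm_apply_le_norm (E := fun _ : S2 => ℝ) ENNReal.top_ne_zero f (n, 1)
  simp only [Real.norm_eq_abs] at *
  have key : ∀ a b : ℝ, |a| ≤ ‖f‖ → |b| ≤ ‖f‖ → |(a - b) / 2| ≤ ‖f‖ := by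
    intro a b ha hb
    rw [abs_div, abs_two, div_le_iff₀ (by norm_num)]
    calc |a - b| ≤ |a| + |b| := abs_sub _ _
      _ ≤ ‖f‖ + ‖f‖ := add_le_add ha hb
      _ = ‖f‖ * 2 := by ring
  fin_cases i
  · show |(f : S2 → ℝ) (n, 0) - ((f : S2 → ℝ) (n, 0) + (f : S2 → ℝ) (n, 1)) / 2| ≤ ‖f‖
    rw [show (f : S2 → ℝ) (n, 0) - ((f : S2 → ℝ) (n, 0) + (f : S2 → ℝ) (n, 1)) / 2 =
      ((f : S2 → ℝ) (n, 0) - (f : S2 → ℝ) (n, 1)) / 2 by ring]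
    exact key _ _ h0 h1
  · show |(f : S2 → ℝ) (n, 1) - ((f : S2 → ℝ) (n, 0) + (f : S2 → ℝ) (n, 1)) / 2| ≤ ‖f‖
    rw [show (f : S2 → ℝ) (n, 1) - ((f : S2 → ℝ) (n, 0) + (f : S2 → ℝ) (n, 1)) / 2 =
      ((f : S2 → ℝ) (n, 1) - (f : S2 → ℝ) (n, 0)) / 2 by ring]
    exact key _ _ h1 h0

end St8


set_option maxHeartbeats 1000000 in
set_option synthInstance.maxHeartbeats 400000 in
/-- In the framework FR(1)–FR(5): there is a closed subspace `X` of `JL(𝓑)` such that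
`JL(𝓑)` is the internal direct sum of `JL(𝓐)` and `X`, and both are 1-complemented.
Specifically, `(Pg)(n,0) = (Pg)(n,1) = ½(g(n,0) + g(n,1))` defines a norm-one projection
`P` of `JL(𝓑)` onto `JL(𝓐)`, and `Q = I − P` is a norm-one projection onto `X = ker P`. -/
theorem statement8 (𝓐 : Set (Set S2)) (B0 B1 : Set S2 → Set S2) (hFR : FRhyp 𝓐 B0 B1) :
    ∃ (_ : JLA 𝓐 ≤ JLB 𝓐 B0 B1) (P : ↥(JLB 𝓐 B0 B1) →L[ℝ] ↥(JLB 𝓐 B0 B1)),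
      -- the defining formula for P
      (∀ (g : ↥(JLB 𝓐 B0 B1)) (n : ℕ) (i : Fin 2),
        ((P g : lp (fun _ : S2 => ℝ) ∞) : S2 → ℝ) (n, i) =
          (((g : lp (fun _ : S2 => ℝ) ∞) : S2 → ℝ) (n, 0) +
            ((g : lp (fun _ : S2 => ℝ) ∞) : S2 → ℝ) (n, 1)) / 2) ∧
      -- P is a norm-one projection of JL(𝓑) onto JL(𝓐)
      ‖P‖ = 1 ∧ (∀ g, P (P g) = P g) ∧
      (∀ g, ((P g : lp (fun _ : S2 => ℝ) ∞)) ∈ JLA 𝓐) ∧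
      (∀ g : ↥(JLB 𝓐 B0 B1), ((g : lp (fun _ : S2 => ℝ) ∞)) ∈ JLA 𝓐 → P g = g) ∧
      -- Q = I − P is a norm-one projection onto X = ker P, which is closed
      ‖ContinuousLinearMap.id ℝ ↥(JLB 𝓐 B0 B1) - P‖ = 1 ∧
      Set.range ⇑(ContinuousLinearMap.id ℝ ↥(JLB 𝓐 B0 B1) - P) =
        (LinearMap.ker (P : ↥(JLB 𝓐 B0 B1) →ₗ[ℝ] ↥(JLB 𝓐 B0 B1)) : Set ↥(JLB 𝓐 B0 B1)) ∧
      IsClosed (LinearMap.ker (P : ↥(JLB 𝓐 B0 B1) →ₗ[ℝ] ↥(JLB 𝓐 B0 B1)) : Set ↥(JLB 𝓐 B0 B1)) ∧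
      -- JL(𝓑) is the internal direct sum of JL(𝓐) and X = ker P
      (∀ f : ↥(JLB 𝓐 B0 B1), ∃! q : ↥(JLB 𝓐 B0 B1) × ↥(JLB 𝓐 B0 B1),
        ((q.1 : lp (fun _ : S2 => ℝ) ∞)) ∈ JLA 𝓐 ∧ q.2 ∈ LinearMap.ker (P : ↥(JLB 𝓐 B0 B1) →ₗ[ℝ] ↥(JLB 𝓐 B0 B1)) ∧
          f = q.1 + q.2) := by
  classical
  have hle : JLA 𝓐 ≤ JLB 𝓐 B0 B1 := St8.JLA_le_JLB 𝓐 B0 B1 hFR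
  have hmaps : ∀ f, f ∈ JLB 𝓐 B0 B1 → St8.T f ∈ JLA 𝓐 :=
    St8.T_maps_JLB_to_JLA 𝓐 B0 B1 hFR
  set P : ↥(JLB 𝓐 B0 B1) →L[ℝ] ↥(JLB 𝓐 B0 B1) :=
    (St8.T.comp (JLB 𝓐 B0 B1).subtypeL).codRestrict (JLB 𝓐 B0 B1)
      (fun g => hle (hmaps _ g.2)) with hPdef
  have hPcoe : ∀ g : ↥(JLB 𝓐 B0 B1), ((P g : lp (fun _ : S2 => ℝ) ∞)) = St8.T ↑g :=
    fun g => rfl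
  have hPmem : ∀ g, ((P g : lp (fun _ : S2 => ℝ) ∞)) ∈ JLA 𝓐 := fun g => hmaps _ g.2
  have hFCle : JLA 𝓐 ≤ St8.FC := St8.JLA_le_FC 𝓐 hFR.1
  have hPfix : ∀ g : ↥(JLB 𝓐 B0 B1), ((g : lp (fun _ : S2 => ℝ) ∞)) ∈ JLA 𝓐 → P g = g :=
    fun g hg => Subtype.ext (St8.T_of_FC (hFCle hg))
  have hPidem : ∀ g, P (P g) = P g := fun g => hPfix (P g) (hPmem g)
  have hPnorm : ‖P‖ = 1 := by
    apply le_antisymm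
    · apply ContinuousLinearMap.opNorm_le_bound _ zero_le_one
      intro g
      rw [one_mul]
      exact St8.T_norm_le (↑g : St8.L)
    · have hg0 : ind (Set.univ : Set S2) ∈ JLB 𝓐 B0 B1 := St8.ind_mem_JLB_univ
      set g0 : ↥(JLB 𝓐 B0 B1) := ⟨ind Set.univ, hg0⟩ with hg0def
      have h1 : P g0 = g0 := hPfix g0 St8.ind_mem_JLA_univ
      have h2 : ‖g0‖ = 1 := St8.norm_ind_univ
      have := P.le_opNorm g0
      rw [h1, h2, mul_one] at this
      exact this
  have hQcoe : ∀ g : ↥(JLB 𝓐 B0 B1),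
      (((ContinuousLinearMap.id ℝ ↥(JLB 𝓐 B0 B1) - P) g : lp (fun _ : S2 => ℝ) ∞)) =
        (↑g : St8.L) - St8.T ↑g := by
    intro g
    rw [ContinuousLinearMap.sub_apply, ContinuousLinearMap.id_apply,
      AddSubgroupClass.coe_sub, hPcoe]
  have hQnorm : ‖ContinuousLinearMap.id ℝ ↥(JLB 𝓐 B0 B1) - P‖ = 1 := by
    apply le_antisymm
    · apply ContinuousLinearMap.opNorm_le_bound _ zero_le_one
      intro g
      rw [one_mul]
      show ‖(((ContinuousLinearMap.id ℝ ↥(JLB 𝓐 B0 B1) - P) g :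
        lp (fun _ : S2 => ℝ) ∞))‖ ≤ ‖(↑g : St8.L)‖
      rw [hQcoe]
      apply lp.norm_le_of_forall_le (norm_nonneg _)
      intro s
      rw [lp.coeFn_sub, Pi.sub_apply]
      exact St8.sub_T_bound (↑g : St8.L) s
    · set g1 : ↥(JLB 𝓐 B0 B1) := ⟨St8.g1, St8.g1_mem 𝓐 B0 B1⟩ with hg1def
      have hP1 : P g1 = 0 := by
        apply Subtype.ext
        rw [hPcoe]
        exact St8.T_g1
      have h1 : (ContinuousLinearMap.id ℝ ↥(JLB 𝓐 B0 B1) - P) g1 = g1 := by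
        rw [ContinuousLinearMap.sub_apply, ContinuousLinearMap.id_apply, hP1, sub_zero]
      have h2 : ‖g1‖ = 1 := St8.norm_g1
      have := (ContinuousLinearMap.id ℝ ↥(JLB 𝓐 B0 B1) - P).le_opNorm g1
      rw [h1, h2, mul_one] at this
      exact this
  have hrange : Set.range ⇑(ContinuousLinearMap.id ℝ ↥(JLB 𝓐 B0 B1) - P) =
      (LinearMap.ker (P : ↥(JLB 𝓐 B0 B1) →ₗ[ℝ] ↥(JLB 𝓐 B0 B1)) : Set ↥(JLB 𝓐 B0 B1)) := by
    ext g
    constructor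
    · rintro ⟨x, rfl⟩
      rw [SetLike.mem_coe, LinearMap.mem_ker, ContinuousLinearMap.coe_coe]
      rw [ContinuousLinearMap.sub_apply, ContinuousLinearMap.id_apply, map_sub, hPidem,
        sub_self]
    · intro hg
      rw [SetLike.mem_coe, LinearMap.mem_ker, ContinuousLinearMap.coe_coe] at hg
      exact ⟨g, by rw [ContinuousLinearMap.sub_apply, ContinuousLinearMap.id_apply, hg,
        sub_zero]⟩
  refine ⟨hle, P, fun g n i => rfl, hPnorm, hPidem, hPmem, hPfix, hQnorm, hrange,
    ContinuousLinearMap.isClosed_ker P, ?_⟩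
  intro f
  refine ⟨(P f, f - P f), ⟨hPmem f, ?_, by rw [← add_sub_assoc, add_sub_cancel_left]⟩, ?_⟩
  · rw [LinearMap.mem_ker, ContinuousLinearMap.coe_coe, map_sub, hPidem, sub_self]
  · rintro ⟨q1, q2⟩ ⟨h1, h2, h3⟩
    rw [LinearMap.mem_ker, ContinuousLinearMap.coe_coe] at h2
    have hq1 : P q1 = q1 := hPfix q1 h1
    have hPf : P f = q1 := by
      rw [h3, map_add, hq1, h2, add_zero]
    have hq2 : q2 = f - P f := by
      rw [hPf, h3, add_sub_cancel_left]
    exact Prod.ext hPf.symm hq2
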